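/- Suppose along a trajectory x : ℕ → 𝕏 there are times 0 = τ₀ < τ₁ < ⋯ with τ_{k+1} − τ_k ≤ N such that V(x(τ_{k+1})) ≤ (1−α)·V(x(τ_k)) for all k, and V(x(t)) ≤ φ(V(x(τ_k))) for all t ∈ (τ_k : τ_{k+1}]. Then for every k and every t ∈ (τ_k : τ_{k+1}], V(x(t)) ≤ φ(V(x(0))·e^{α − α·t/N}), where V is nonnegative and φ ∈ 𝒦_∞. -/
import Mathlib


/-- non-monotonic Lyapunov decay along visit times gives an
exponential envelope. -/
theorem nonmonotonic_lyapunov_envelope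
    {X : Type*} (V : X → ℝ) (hVnn : ∀ x, 0 ≤ V x)
    (α : ℝ) (hα : α ∈ Set.Ioo (0 : ℝ) 1) (N : ℕ) (hN : 1 ≤ N)
    (φ : ℝ → ℝ) (hφc : ContinuousOn φ (Set.Ici 0))
    (hφm : StrictMonoOn φ (Set.Ici 0)) (hφ0 : φ 0 = 0)
    (x : ℕ → X) (τ : ℕ → ℕ)
    (hτ0 : τ 0 = 0)
    (hτmono : ∀ k, τ k < τ (k + 1))
    (hτgap : ∀ k, τ (k + 1) ≤ τ k + N)
    (hdec : ∀ k, V (x (τ (k + 1))) ≤ (1 - α) * V (x (τ k)))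
    (hbound : ∀ k, ∀ t : ℕ, τ k < t → t ≤ τ (k + 1) → V (x t) ≤ φ (V (x (τ k)))) :
    ∀ k, ∀ t : ℕ, τ k < t → t ≤ τ (k + 1) →
      V (x t) ≤ φ (V (x 0) * Real.exp (α - α * t / N)) := by
  obtain ⟨hα0, hα1⟩ := hα
  have hNpos : (0:ℝ) < N := by exact_mod_cast hN
  -- geometric decay along τ
  have hgeo : ∀ k, V (x (τ k)) ≤ (1 - α) ^ k * V (x 0) := by
    intro k
    induction k with
    | zero => simp [hτ0]
    | succ k ih =>
      calc V (x (τ (k+1))) ≤ (1 - α) * V (x (τ k)) := hdec k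
        _ ≤ (1 - α) * ((1 - α) ^ k * V (x 0)) := by
            apply mul_le_mul_of_nonneg_left ih (by linarith)
        _ = (1 - α) ^ (k+1) * V (x 0) := by ring
  have hτle : ∀ k, τ k ≤ k * N := by
    intro k
    induction k with
    | zero => simp [hτ0]
    | succ k ih =>
      calc τ (k+1) ≤ τ k + N := hτgap k
        _ ≤ k * N + N := by omega
        _ = (k+1) * N := by ring
  intro k t ht1 ht2
  have htk : (t:ℝ) ≤ (k+1) * N := by
    have : t ≤ (k+1) * N := le_trans ht2 (hτle (k+1))
    exact_mod_cast this
  -- (1-α)^k ≤ exp(α - α t / N)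
  have hpow : (1 - α) ^ k ≤ Real.exp (α - α * t / N) := by
    have h1 : (1 - α) ^ k ≤ Real.exp (-α) ^ k := by
      apply pow_le_pow_left₀ (by linarith)
      linarith [Real.add_one_le_exp (-α)]
    have h2 : Real.exp (-α) ^ k = Real.exp (-(α * k)) := by
      rw [← Real.exp_nat_mul]; ring_nf
    have h3 : -(α * k) ≤ α - α * t / N := by
      have : α * t / N ≤ α * (k + 1) := by
        rw [div_le_iff₀ hNpos]; nlinarith
      linarith
    calc (1 - α) ^ k ≤ Real.exp (-(α * k)) := by rw [← h2]; exact h1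
      _ ≤ Real.exp (α - α * t / N) := Real.exp_le_exp.mpr h3
  have hchain : V (x (τ k)) ≤ V (x 0) * Real.exp (α - α * t / N) := by
    calc V (x (τ k)) ≤ (1 - α) ^ k * V (x 0) := hgeo k
      _ ≤ Real.exp (α - α * t / N) * V (x 0) :=
          mul_le_mul_of_nonneg_right hpow (hVnn _)
      _ = V (x 0) * Real.exp (α - α * t / N) := mul_comm _ _
  calc V (x t) ≤ φ (V (x (τ k))) := hbound k t ht1 ht2
    _ ≤ φ (V (x 0) * Real.exp (α - α * t / N)) := by
        apply hφm.monotoneOn (hVnn _) _ hchain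
        exact mul_nonneg (hVnn _) (Real.exp_pos _).le
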